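/- Let A_e(x,t) = Σ_{k even} F_k(x) t^k and A_o(x,t) = Σ_{k odd} F_k(x) t^k, where F_k(x) = Σ_n a_k(n) x^n/n!. Then A_e(x,t)^2 − A_o(x,t)^2 = 1 as formal power series. -/

import Mathlib

/-- The list of values of a permutation of `Fin n` (0-indexed; relative order
is what matters). -/
def permList (n : ℕ) (w : Equiv.Perm (Fin n)) : List ℕ :=
  List.ofFn (fun i => (w i : ℕ))

/-- A list is alternating: `a > b < c > d < ⋯` (descents in even positions). -/
def IsAlt (l : List ℕ) : Prop :=
  ∀ i : ℕ, ∀ hi : i + 1 < l.length,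
    if i % 2 = 0 then l.get ⟨i + 1, hi⟩ < l.get ⟨i, Nat.lt_of_succ_lt hi⟩
    else l.get ⟨i, Nat.lt_of_succ_lt hi⟩ < l.get ⟨i + 1, hi⟩

/-- `asLen n w` : the maximum length of an alternating subsequence of `w`. -/
noncomputable def asLen (n : ℕ) (w : Equiv.Perm (Fin n)) : ℕ :=
  sSup {k | ∃ l : List ℕ, l.Sublist (permList n w) ∧ IsAlt l ∧ l.length = k}

/-- `aCount n k = #{w ∈ S_n : as(w) = k}`. -/
noncomputable def aCount (n k : ℕ) : ℕ :=
  Nat.card {w : Equiv.Perm (Fin n) // asLen n w = k}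

/-- `bCount n k = #{w ∈ S_n : as(w) ≤ k}`. -/
noncomputable def bCount (n k : ℕ) : ℕ :=
  Nat.card {w : Equiv.Perm (Fin n) // asLen n w ≤ k}

/-- The even part `A_e(x,t)` as a formal power series in `x` (variable 0)
and `t` (variable 1); coefficient of `x^n t^k` is `a_k(n)/n!` for `k` even. -/
noncomputable def Ae : MvPowerSeries (Fin 2) ℚ :=
  fun d => if d 1 % 2 = 0 then (aCount (d 0) (d 1) : ℚ) / (d 0).factorial else 0

/-- The odd part `A_o(x,t)`. -/
noncomputable def Ao : MvPowerSeries (Fin 2) ℚ :=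
  fun d => if d 1 % 2 = 1 then (aCount (d 0) (d 1) : ℚ) / (d 0).factorial else 0


namespace AltProof

/-- Number of sign changes scanning list `l`, with previous sign `s` and previous value `p`. -/
def chg : Bool → ℕ → List ℕ → ℕ
  | _, _, [] => 0
  | s, p, a :: r => (if (decide (p < a)) = s then 0 else 1) + chg (decide (p < a)) a r

/-- Final sign after scanning. -/
def fsn : Bool → ℕ → List ℕ → Bool
  | s, _, [] => s
  | _, p, a :: r => fsn (decide (p < a)) a r

/-- Last value (with default previous value `p`). -/
def lsv : ℕ → List ℕ → ℕ
  | p, [] => p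
  | _, a :: r => lsv a r

def asStat : List ℕ → ℕ
  | [] => 0
  | a :: r => 1 + chg true a r

def lStat : List ℕ → ℕ
  | [] => 0
  | a :: r => chg true a r + (if fsn true a r then 0 else 1)

def rStat : List ℕ → ℕ
  | [] => 0
  | a :: r => 1 + chg false a r

theorem chg_append (l l' : List ℕ) : ∀ (s : Bool) (p : ℕ),
    chg s p (l ++ l') = chg s p l + chg (fsn s p l) (lsv p l) l' := by
  induction l with
  | nil => intro s p; simp [chg, fsn, lsv]
  | cons a r ih =>
    intro s p
    simp only [List.cons_append, chg, fsn, lsv, List.append_eq]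
    rw [ih]
    omega

theorem lsv_mem (p : ℕ) (l : List ℕ) : lsv p l ∈ p :: l := by
  induction l generalizing p with
  | nil => simp [lsv]
  | cons a r ih =>
    rcases (List.mem_cons).1 (ih a) with h | h
    · simp [lsv, h]
    · simp [lsv, List.mem_cons.2 (Or.inr h)]

theorem chg_flip_le (s s' : Bool) (p : ℕ) (l : List ℕ) : chg s p l ≤ 1 + chg s' p l := by
  cases l with
  | nil => simp [chg]
  | cons a r =>
    simp only [chg]
    have : (if (decide (p < a)) = s then 0 else 1) ≤ 1 := by split <;> omega
    omega

theorem chg_cons_le (s : Bool) (p a : ℕ) (l : List ℕ) : chg s p l ≤ chg s p (a :: l) := by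
  cases l with
  | nil => simp [chg]
  | cons b r =>
    have hflip1 := chg_flip_le true false b r
    have hflip2 := chg_flip_le false true b r
    simp only [chg]
    by_cases hpb : p < b <;> by_cases hab : a < b <;> by_cases hpa : p < a <;>
      simp only [hpb, hab, hpa, decide_true, decide_false] <;>
      cases s <;>
      (try simp only [Bool.false_eq_true, Bool.true_eq_false, if_false, if_true, reduceIte]) <;>
      omega

theorem chg_sublist_le {l w : List ℕ} (h : l.Sublist w) : ∀ (s : Bool) (p : ℕ),
    chg s p l ≤ chg s p w := by
  induction h with
  | slnil => intro s p; simp [chg]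
  | cons a _ ih => intro s p; exact (ih s p).trans (chg_cons_le s p a _)
  | cons_cons a _ ih => intro s p; simp only [chg]; exact Nat.add_le_add_left (ih _ _) _

theorem asStat_cons_le (a : ℕ) (l : List ℕ) : asStat l ≤ asStat (a :: l) := by
  cases l with
  | nil => simp [asStat]
  | cons b r =>
    simp only [asStat, chg]
    by_cases hab : a < b
    · simp [decide_eq_true hab]
    · simp only [decide_eq_false hab, Bool.false_eq_true, if_false]
      have := chg_flip_le true false b r
      omega

theorem asStat_sublist_le {l w : List ℕ} (h : l.Sublist w) : asStat l ≤ asStat w := by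
  induction h with
  | slnil => simp [asStat]
  | cons a _ ih => exact ih.trans (asStat_cons_le a _)
  | cons_cons a h ih =>
    simp only [asStat]
    exact Nat.add_le_add_left (chg_sublist_le h _ _) _

theorem chg_mod_two (l : List ℕ) : ∀ (s : Bool) (p : ℕ),
    chg s p l % 2 = if fsn s p l = s then 0 else 1 := by
  induction l with
  | nil => intro s p; simp [chg, fsn]
  | cons a r ih =>
    intro s p
    simp only [chg, fsn]
    have h := ih (decide (p < a)) a
    rcases Bool.eq_false_or_eq_true (fsn (decide (p < a)) a r) with h2 | h2 <;>
    rcases Bool.eq_false_or_eq_true (decide (p < a)) with h3 | h3 <;>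
    simp only [h3] at h h2 ⊢ <;> simp only [h2] at h ⊢ <;> cases s <;> simp at h ⊢ <;> omega


/-! ### The alternating predicate -/

def Alt : Bool → List ℕ → Prop
  | _, [] => True
  | _, [_] => True
  | s, a :: b :: r => (if s then a < b else b < a) ∧ Alt (!s) (b :: r)

@[simp] theorem alt_nil (s : Bool) : Alt s [] := trivial
@[simp] theorem alt_singleton (s : Bool) (a : ℕ) : Alt s [a] := trivial
theorem alt_cons_cons {s : Bool} {a b : ℕ} {r : List ℕ} :
    Alt s (a :: b :: r) ↔ (if s then a < b else b < a) ∧ Alt (!s) (b :: r) := Iff.rfl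

/-- generalized version of `IsAlt` -/
def IA (s : Bool) (l : List ℕ) : Prop :=
  ∀ i : ℕ, ∀ hi : i + 1 < l.length,
    if (decide (i % 2 = 0)) = !s then l.get ⟨i + 1, hi⟩ < l.get ⟨i, Nat.lt_of_succ_lt hi⟩
    else l.get ⟨i, Nat.lt_of_succ_lt hi⟩ < l.get ⟨i + 1, hi⟩

theorem isAlt_iff_IA (l : List ℕ) : IsAlt l ↔ IA false l := by
  unfold IsAlt IA
  constructor <;> intro h i hi <;> have H := h i hi <;> by_cases hp : i % 2 = 0 <;>
    simp only [hp, if_true, if_false, decide_true, decide_false, Bool.not_false] at H ⊢ <;>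
    exact H

theorem IA_nil (s : Bool) : IA s [] := by intro i hi; simp at hi
theorem IA_singleton (s : Bool) (a : ℕ) : IA s [a] := by intro i hi; simp at hi

theorem IA_cons_cons {s : Bool} {a b : ℕ} {r : List ℕ} :
    IA s (a :: b :: r) ↔ (if s then a < b else b < a) ∧ IA (!s) (b :: r) := by
  constructor
  · intro h
    constructor
    · have H := h 0 (by simp)
      cases s <;> simpa using H
    · intro i hi
      have hi' : (i + 1) + 1 < (a :: b :: r).length := by
        simpa using Nat.succ_lt_succ hi
      have H := h (i + 1) hi'
      have hpar : ((i+1) % 2 = 0) ↔ ¬ (i % 2 = 0) := by omega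
      by_cases hp : i % 2 = 0 <;>
        simp only [hpar, hp, not_true, not_false_iff, decide_true, decide_false,
          if_true, if_false, Bool.not_not, iff_true, iff_false, decide_eq_true_eq] at H ⊢ <;>
        rcases Bool.eq_false_or_eq_true s with hs | hs <;> subst hs <;>
        simp only [Bool.not_true, Bool.not_false, if_true, if_false, List.get_cons_succ] at H ⊢ <;>
        first
          | exact H
          | (split at H <;> split <;> first | exact H | simp_all)
  · rintro ⟨h1, h2⟩ i hi
    match i with
    | 0 => cases s <;> simpa using h1
    | (j+1) =>
      have hj : j + 1 < (b :: r).length := by simpa using Nat.lt_of_succ_lt_succ hi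
      have H := h2 j hj
      have hpar : ((j+1) % 2 = 0) ↔ ¬ (j % 2 = 0) := by omega
      by_cases hp : j % 2 = 0 <;>
        simp only [hpar, hp, not_true, not_false_iff, decide_true, decide_false,
          if_true, if_false, Bool.not_not, decide_eq_true_eq] at H ⊢ <;>
        rcases Bool.eq_false_or_eq_true s with hs | hs <;> subst hs <;>
        simp only [Bool.not_true, Bool.not_false, if_true, if_false, List.get_cons_succ] at H ⊢ <;>
        first
          | exact H
          | (split at H <;> split <;> first | exact H | simp_all)

theorem IA_iff_Alt : ∀ (l : List ℕ) (s : Bool), IA s l ↔ Alt s l := by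
  intro l
  induction l with
  | nil => intro s; simp [IA_nil]
  | cons a t ih =>
    intro s
    cases t with
    | nil => simp [IA_singleton]
    | cons b r =>
      rw [IA_cons_cons, alt_cons_cons, ih (!s)]

theorem isAlt_iff_alt (l : List ℕ) : IsAlt l ↔ Alt false l := by
  rw [isAlt_iff_IA, IA_iff_Alt]

theorem alt_take : ∀ (l : List ℕ) (s : Bool) (k : ℕ), Alt s l → Alt s (l.take k) := by
  intro l
  induction l with
  | nil => intro s k _; simp
  | cons a t ih =>
    intro s k h
    cases k with
    | zero => simp
    | succ j =>
      cases t with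
      | nil => simp
      | cons b r =>
        cases j with
        | zero => simp
        | succ i =>
          rw [alt_cons_cons] at h
          have := ih (!s) (i+1) h.2
          simp only [List.take_succ_cons] at this ⊢
          exact alt_cons_cons.2 ⟨h.1, this⟩

theorem alt_chg : ∀ (l : List ℕ) (s : Bool) (p : ℕ), Alt s (p :: l) → chg (!s) p l = l.length := by
  intro l
  induction l with
  | nil => intro s p _; simp [chg]
  | cons a r ih =>
    intro s p h
    rw [alt_cons_cons] at h
    have hd : decide (p < a) = s := by
      rcases Bool.eq_false_or_eq_true s with hs | hs <;> subst hs <;> simp_all <;> omega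
    have ht := ih (!s) a h.2
    rw [Bool.not_not] at ht
    simp only [chg, hd, ht]
    have : ¬ (s = !s) := by cases s <;> simp
    rw [if_neg this]
    simp only [List.length_cons]
    omega

theorem asStat_of_alt {l : List ℕ} (h : Alt false l) : asStat l = l.length := by
  cases l with
  | nil => simp [asStat]
  | cons a r =>
    have := alt_chg r false a h
    simp only [asStat, Bool.not_false, List.length_cons] at this ⊢
    omega

/-! ### last value and appending -/

theorem lsv_getLast? (c : ℕ) (r : List ℕ) : (c :: r).getLast? = some (lsv c r) := by
  induction r generalizing c with
  | nil => simp [lsv]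
  | cons a t ih => rw [List.getLast?_cons_cons, ih a]; simp [lsv]

theorem asStat_append_singleton (c a : ℕ) (r : List ℕ) :
    asStat ((c :: r) ++ [a]) =
      asStat (c :: r) + (if decide (lsv c r < a) = fsn true c r then 0 else 1) := by
  simp only [asStat, List.cons_append, chg_append, chg]
  omega

theorem fsn_true_iff (c : ℕ) (r : List ℕ) : fsn true c r = true ↔ asStat (c :: r) % 2 = 1 := by
  have h := chg_mod_two r true c
  simp only [asStat]
  cases hF : fsn true c r <;> rw [hF] at h <;> simp at h ⊢ <;> omega

theorem alt_append_singleton :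
    ∀ (l : List ℕ) (s : Bool) (b a : ℕ), Alt s l → l.getLast? = some b → a ≠ b →
      ((b < a) ↔ (if s then l.length % 2 = 1 else l.length % 2 = 0)) → Alt s (l ++ [a]) := by
  intro l
  induction l with
  | nil => intro s b a _ h; simp at h
  | cons c t ih =>
    intro s b a halt hlast hne hcmp
    cases t with
    | nil =>
      simp only [List.getLast?_singleton, Option.some.injEq] at hlast
      subst hlast
      refine alt_cons_cons.2 ⟨?_, by simp⟩
      cases s <;> simp at hcmp ⊢ <;> omega
    | cons d r =>
      rw [alt_cons_cons] at halt
      rw [List.getLast?_cons_cons] at hlast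
      have hlen : (c :: d :: r).length = (d :: r).length + 1 := rfl
      have hcmp' : (b < a) ↔ (if !s then (d :: r).length % 2 = 1 else (d :: r).length % 2 = 0) := by
        cases s <;>
          simp only [Bool.not_false, Bool.not_true, Bool.false_eq_true, Bool.true_eq_false,
            if_false, if_true, reduceIte] at hcmp ⊢ <;>
          rw [hcmp] <;> rw [hlen] <;> omega
      have := ih (!s) b a halt.2 hlast hne hcmp'
      exact alt_cons_cons.2 ⟨halt.1, this⟩

theorem alt_dropLast_cmp :
    ∀ (l : List ℕ) (s : Bool) (b : ℕ), Alt s l → l.getLast? = some b → 2 ≤ l.length →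
      ∃ c, l.dropLast.getLast? = some c ∧
        ((c < b) ↔ (if s then l.length % 2 = 0 else l.length % 2 = 1)) := by
  intro l
  induction l with
  | nil => intro s b _ h; simp at h
  | cons x t ih =>
    intro s b halt hlast hlen
    cases t with
    | nil => simp at hlen
    | cons y r =>
      cases r with
      | nil =>
        simp only [List.getLast?_cons_cons, List.getLast?_singleton, Option.some.injEq] at hlast
        subst hlast
        refine ⟨x, by simp, ?_⟩
        have h1 := (alt_cons_cons.1 halt).1
        cases s <;> simp at h1 ⊢ <;> omega
      | cons z r' =>
        have halt' := alt_cons_cons.1 halt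
        rw [List.getLast?_cons_cons] at hlast
        obtain ⟨c, hc1, hc2⟩ := ih (!s) b halt'.2 hlast (by simp)
        refine ⟨c, ?_, ?_⟩
        · have hd : (x :: y :: z :: r').dropLast = x :: (y :: z :: r').dropLast := rfl
          rw [hd]
          cases hh : (y :: z :: r').dropLast with
          | nil => have := congrArg List.length hh; simp at this
          | cons u v =>
            rw [hh] at hc1
            rw [List.getLast?_cons_cons]
            exact hc1
        · have h1 : (x :: y :: z :: r').length = (y :: z :: r').length + 1 := rfl
          cases s <;>
            simp only [Bool.not_false, Bool.not_true, Bool.false_eq_true, Bool.true_eq_false,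
              if_false, if_true, reduceIte] at hc2 ⊢ <;>
            rw [hc2] <;> rw [h1] <;> omega

/-! ### the main construction -/

theorem exists_alt (w : List ℕ) (hw : w ≠ []) (hnd : w.Nodup) :
    ∃ l, l.Sublist w ∧ Alt false l ∧ l.length = asStat w ∧
      ∃ b, l.getLast? = some b ∧ w.getLast? = some b := by
  induction w using List.reverseRecOn with
  | nil => exact absurd rfl hw
  | append_singleton w' a ih =>
    cases w' with
    | nil =>
      refine ⟨[a], by simp, by simp, by simp [asStat, chg], a, by simp, by simp⟩
    | cons c r =>
      have hnd' : (c :: r).Nodup := (List.sublist_append_left (c :: r) [a]).nodup hnd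
      have hanotin : a ∉ (c :: r) := by
        intro hmem
        exact (List.disjoint_of_nodup_append hnd) hmem (by simp)
      obtain ⟨l, hsub, halt, hlen, b, hlastl, hlastw⟩ := ih (by simp) hnd'
      have hb : b = lsv c r := by
        rw [lsv_getLast? c r] at hlastw
        injection hlastw with h
        exact h.symm
      have hbmem : b ∈ (c :: r) := hb ▸ lsv_mem c r
      have hne : a ≠ b := fun h => hanotin (h ▸ hbmem)
      have hstat := asStat_append_singleton c a r
      rw [← hb] at hstat
      have hpar := fsn_true_iff c r
      have hlastgoal : (c :: r ++ [a]).getLast? = some a := List.getLast?_concat (l := c :: r)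
      by_cases hBS : decide (b < a) = fsn true c r
      · -- statistic unchanged: replace last element of l by a
        rw [hstat, if_pos hBS]
        have hlpos : l ≠ [] := by intro h; rw [h] at hlastl; simp at hlastl
        have hlen1 : 1 ≤ l.length := List.length_pos_iff.2 hlpos
        by_cases hl1 : l.length = 1
        · refine ⟨[a], ?_, by simp, ?_, a, by simp, hlastgoal⟩
          · exact (List.nil_sublist (c :: r)).append (List.Sublist.refl [a])
          · simp only [List.length_singleton]; omega
        · have hlen2 : 2 ≤ l.length := by omega
          obtain ⟨c', hc'1, hc'2⟩ := alt_dropLast_cmp l false b halt hlastl hlen2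
          simp only [Bool.false_eq_true, if_false, reduceIte] at hc'2
          have hc'mem : c' ∈ (c :: r) := by
            have hmem : c' ∈ l.dropLast := by
              cases hh : l.dropLast with
              | nil => rw [hh] at hc'1; simp at hc'1
              | cons u v =>
                rw [hh] at hc'1
                rw [lsv_getLast? u v] at hc'1
                injection hc'1 with hh2
                exact hh2 ▸ lsv_mem u v
            exact hsub.mem ((List.dropLast_sublist l).mem hmem)
          have hnec' : a ≠ c' := fun h => hanotin (h ▸ hc'mem)
          refine ⟨l.dropLast ++ [a], ?_, ?_, ?_, a, List.getLast?_concat, hlastgoal⟩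
          · exact ((l.dropLast_sublist).trans hsub).append (List.Sublist.refl [a])
          · apply alt_append_singleton _ false c' a
              (by rw [List.dropLast_eq_take]; exact alt_take l false _ halt) hc'1 hnec'
            simp only [Bool.false_eq_true, if_false, reduceIte, List.length_dropLast]
            cases hF : fsn true c r
            · -- final sign false: asStat w' even, l.length even, ¬ b < a hence a < b
              rw [hF] at hBS hpar
              have hBa : ¬ (b < a) := by
                intro hlt; rw [decide_eq_true hlt] at hBS; exact absurd hBS (by simp)
              have heven : ¬ (asStat (c :: r) % 2 = 1) := by
                intro hx; exact absurd (hpar.2 hx) (by simp)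
              have hlev : ¬ (l.length % 2 = 1) := by omega
              have h1 : ¬ (c' < b) := fun hx => hlev (hc'2.1 hx)
              constructor
              · intro hca; exfalso; omega
              · intro hmod; exfalso; omega
            · rw [hF] at hBS hpar
              have hBa : b < a := by
                rcases Nat.lt_or_ge b a with h | h
                · exact h
                · exfalso
                  rw [decide_eq_false (by omega)] at hBS
                  exact absurd hBS (by simp)
              have hodd : asStat (c :: r) % 2 = 1 := hpar.1 rfl
              have hlodd : l.length % 2 = 1 := by omega
              have hc'b : c' < b := hc'2.2 hlodd
              constructor
              · intro _; omega
              · intro _; omega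
          · simp only [List.length_append, List.length_dropLast, List.length_singleton]
            omega
      · -- statistic increases: append a to l
        rw [hstat, if_neg hBS]
        refine ⟨l ++ [a], hsub.append (List.Sublist.refl [a]), ?_, ?_, a,
          List.getLast?_concat, hlastgoal⟩
        · apply alt_append_singleton l false b a halt hlastl hne
          simp only [Bool.false_eq_true, if_false, reduceIte]
          cases hF : fsn true c r
          · -- final sign false, B ≠ S hence b < a; asStat even
            rw [hF] at hBS hpar
            have hBa : b < a := by
              rcases Nat.lt_or_ge b a with h | h
              · exact h
              · exfalso
                exact hBS (by rw [decide_eq_false (by omega)])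
            have heven : ¬ (asStat (c :: r) % 2 = 1) := by
              intro hx; exact absurd (hpar.2 hx) (by simp)
            constructor
            · intro _; omega
            · intro _; exact hBa
          · rw [hF] at hBS hpar
            have hBa : ¬ (b < a) := by
              intro hlt; exact hBS (by rw [decide_eq_true hlt])
            have hodd : asStat (c :: r) % 2 = 1 := hpar.1 rfl
            constructor
            · intro h; exact absurd h hBa
            · intro h; exfalso; omega
        · simp only [List.length_append, List.length_singleton]
          omega


/-! ### `asLen` equals `asStat` -/

theorem permList_nodup (n : ℕ) (w : Equiv.Perm (Fin n)) : (permList n w).Nodup := by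
  rw [permList, List.nodup_ofFn]
  exact Fin.val_injective.comp w.injective

theorem asLen_eq (n : ℕ) (w : Equiv.Perm (Fin n)) : asLen n w = asStat (permList n w) := by
  have hIsAltNil : IsAlt [] := by intro i hi; simp at hi
  have hset : {k | ∃ l : List ℕ, l.Sublist (permList n w) ∧ IsAlt l ∧ l.length = k}
      = Set.Iic (asStat (permList n w)) := by
    ext k
    simp only [Set.mem_setOf_eq, Set.mem_Iic]
    constructor
    · rintro ⟨l, hsub, halt, rfl⟩
      calc l.length = asStat l := (asStat_of_alt ((isAlt_iff_alt l).1 halt)).symm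
        _ ≤ _ := asStat_sublist_le hsub
    · intro hk
      by_cases hpl : permList n w = []
      · rw [hpl] at hk
        simp only [asStat, Nat.le_zero] at hk
        exact ⟨[], by simp, hIsAltNil, by simp [hk]⟩
      · obtain ⟨l, hsub, halt, hlen, _⟩ := exists_alt (permList n w) hpl (permList_nodup n w)
        refine ⟨l.take k, (List.take_sublist k l).trans hsub,
          (isAlt_iff_alt _).2 (alt_take l false k halt), ?_⟩
        rw [List.length_take, hlen]
        omega
  rw [asLen, hset]
  exact csSup_Iic


/-! ### words over a finset -/

noncomputable def wordFinset (s : Finset ℕ) : Finset (List ℕ) :=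
  ((s.sort (· ≤ ·)).permutations).toFinset

theorem mem_wordFinset {s : Finset ℕ} {l : List ℕ} :
    l ∈ wordFinset s ↔ l.Nodup ∧ l.toFinset = s := by
  rw [wordFinset, List.mem_toFinset, List.mem_permutations]
  constructor
  · intro h
    refine ⟨h.symm.nodup (s.sort_nodup _), ?_⟩
    rw [List.toFinset_eq_of_perm _ _ h, Finset.sort_toFinset]
  · rintro ⟨h1, h2⟩
    exact List.perm_of_nodup_nodup_toFinset_eq h1 (s.sort_nodup _)
      (by rw [h2, Finset.sort_toFinset])

theorem length_of_mem_wordFinset {s : Finset ℕ} {l : List ℕ} (h : l ∈ wordFinset s) :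
    l.length = s.card := by
  rw [wordFinset, List.mem_toFinset, List.mem_permutations] at h
  rw [h.length_eq, Finset.length_sort]

/-! ### invariance of the statistics under monotone/antitone relabelings -/

theorem chg_fsn_map (g : ℕ → ℕ) : ∀ (l : List ℕ) (p : ℕ) (s : Bool),
    (∀ x ∈ p :: l, ∀ y ∈ p :: l, (x < y ↔ g x < g y)) →
    chg s (g p) (l.map g) = chg s p l ∧ fsn s (g p) (l.map g) = fsn s p l := by
  intro l
  induction l with
  | nil => intro p s _; simp [chg, fsn]
  | cons a r ih =>
    intro p s h
    have hd : decide (g p < g a) = decide (p < a) := by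
      simp only [decide_eq_decide]
      exact (h p (by simp) a (by simp)).symm
    have ihr := ih a (decide (p < a))
      (fun x hx y hy => h x (List.mem_cons_of_mem p hx) y (List.mem_cons_of_mem p hy))
    constructor
    · simp only [List.map_cons, chg, hd, ihr.1]
    · simp only [List.map_cons, fsn, hd, ihr.2]

theorem chg_fsn_map_anti (g : ℕ → ℕ) : ∀ (l : List ℕ) (p : ℕ) (s : Bool), (p :: l).Nodup →
    (∀ x ∈ p :: l, ∀ y ∈ p :: l, (x < y ↔ g y < g x)) →
    chg s (g p) (l.map g) = chg (!s) p l ∧ fsn s (g p) (l.map g) = !(fsn (!s) p l) := by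
  intro l
  induction l with
  | nil => intro p s _ _; simp [chg, fsn]
  | cons a r ih =>
    intro p s hnd h
    have hpa : p ≠ a := by
      intro hx; rw [List.nodup_cons] at hnd; exact hnd.1 (hx ▸ by simp)
    have hd : decide (g p < g a) = !(decide (p < a)) := by
      have h1 := h a (by simp) p (by simp)
      rcases Nat.lt_trichotomy p a with hc | hc | hc
      · have hx : ¬ (g p < g a) := fun hx => Nat.lt_asymm hc (h1.2 hx)
        simp [hc, hx]
      · exact absurd hc hpa
      · have hx : g p < g a := h1.1 hc
        simp [Nat.lt_asymm hc, hx]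
    have ihr := ih a (!(decide (p < a))) (List.nodup_cons.1 hnd).2
      (fun x hx y hy => h x (List.mem_cons_of_mem p hx) y (List.mem_cons_of_mem p hy))
    constructor
    · simp only [List.map_cons, chg, hd, ihr.1, Bool.not_not]
      congr 1
      cases hb : (decide (p < a)) <;> cases s <;> simp
    · simp only [List.map_cons, fsn, hd, ihr.2, Bool.not_not]

theorem asStat_map (g : ℕ → ℕ) (u : List ℕ)
    (h : ∀ x ∈ u, ∀ y ∈ u, (x < y ↔ g x < g y)) : asStat (u.map g) = asStat u := by
  cases u with
  | nil => simp
  | cons p l => simp only [List.map_cons, asStat, (chg_fsn_map g l p true h).1]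

theorem lStat_map (g : ℕ → ℕ) (u : List ℕ)
    (h : ∀ x ∈ u, ∀ y ∈ u, (x < y ↔ g x < g y)) : lStat (u.map g) = lStat u := by
  cases u with
  | nil => simp [lStat]
  | cons p l =>
    simp only [List.map_cons, lStat, (chg_fsn_map g l p true h).1, (chg_fsn_map g l p true h).2]

theorem rStat_map (g : ℕ → ℕ) (u : List ℕ)
    (h : ∀ x ∈ u, ∀ y ∈ u, (x < y ↔ g x < g y)) : rStat (u.map g) = rStat u := by
  cases u with
  | nil => simp [rStat]
  | cons p l => simp only [List.map_cons, rStat, (chg_fsn_map g l p false h).1]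

theorem toFinset_map_list (g : ℕ → ℕ) (l : List ℕ) : (l.map g).toFinset = l.toFinset.image g := by
  ext y; simp [List.mem_map]

theorem rStat_map_anti (g : ℕ → ℕ) (u : List ℕ) (hnd : u.Nodup)
    (h : ∀ x ∈ u, ∀ y ∈ u, (x < y ↔ g y < g x)) : rStat (u.map g) = asStat u := by
  cases u with
  | nil => simp [rStat, asStat]
  | cons p l =>
    have := (chg_fsn_map_anti g l p false hnd h).1
    simp only [List.map_cons, rStat, asStat, this, Bool.not_false]

/-! ### relabeling sums over words -/

theorem image_eq_of_inv {S T : Finset ℕ} {g g' : ℕ → ℕ}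
    (hg : ∀ x ∈ S, g x ∈ T) (hg' : ∀ y ∈ T, g' y ∈ S)
    (hg'g : ∀ y ∈ T, g (g' y) = y) : S.image g = T := by
  apply Finset.ext
  intro y
  simp only [Finset.mem_image]
  constructor
  · rintro ⟨x, hx, rfl⟩; exact hg x hx
  · intro hy; exact ⟨g' y, hg' y hy, hg'g y hy⟩

theorem map_mem_wordFinset {S T : Finset ℕ} {g : ℕ → ℕ}
    (hinj : ∀ x ∈ S, ∀ y ∈ S, g x = g y → x = y) (himg : S.image g = T)
    {u : List ℕ} (hu : u ∈ wordFinset S) : u.map g ∈ wordFinset T := by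
  rw [mem_wordFinset] at hu ⊢
  obtain ⟨hnd, hfs⟩ := hu
  constructor
  · exact hnd.map_on (fun x hx y hy => hinj x (by rw [← hfs]; exact List.mem_toFinset.2 hx)
      y (by rw [← hfs]; exact List.mem_toFinset.2 hy))
  · rw [toFinset_map_list, hfs, himg]

theorem sum_wordFinset_relabel {M : Type*} [AddCommMonoid M] (S T : Finset ℕ) (g g' : ℕ → ℕ)
    (hg : ∀ x ∈ S, g x ∈ T) (hg' : ∀ y ∈ T, g' y ∈ S)
    (hgg' : ∀ x ∈ S, g' (g x) = x) (hg'g : ∀ y ∈ T, g (g' y) = y)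
    (F : List ℕ → M) :
    ∑ u ∈ wordFinset T, F u = ∑ u ∈ wordFinset S, F (u.map g) := by
  have himgS : S.image g = T := image_eq_of_inv hg hg' hg'g
  have himgT : T.image g' = S := image_eq_of_inv hg' hg hgg'
  have hinjS : ∀ x ∈ S, ∀ y ∈ S, g x = g y → x = y := by
    intro x hx y hy hxy
    rw [← hgg' x hx, ← hgg' y hy, hxy]
  have hinjT : ∀ x ∈ T, ∀ y ∈ T, g' x = g' y → x = y := by
    intro x hx y hy hxy
    rw [← hg'g x hx, ← hg'g y hy, hxy]
  have memT : ∀ x ∈ wordFinset T, x ∈ wordFinset T → x.toFinset = T :=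
    fun x hx _ => (mem_wordFinset.1 hx).2
  refine Finset.sum_bij' (fun u _ => u.map g') (fun v _ => v.map g)
    (fun u hu => map_mem_wordFinset hinjT himgT hu)
    (fun v hv => map_mem_wordFinset hinjS himgS hv) ?_ ?_ ?_
  · intro u hu
    simp only [List.map_map]
    have hpt : ∀ x ∈ u, (g ∘ g') x = id x := by
      intro x hx
      have : x ∈ T := by
        rw [← (mem_wordFinset.1 hu).2]; exact List.mem_toFinset.2 hx
      simp [hg'g x this]
    rw [List.map_congr_left hpt, List.map_id]
  · intro v hv
    simp only [List.map_map]
    have hpt : ∀ x ∈ v, (g' ∘ g) x = id x := by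
      intro x hx
      have : x ∈ S := by
        rw [← (mem_wordFinset.1 hv).2]; exact List.mem_toFinset.2 hx
      simp [hgg' x this]
    rw [List.map_congr_left hpt, List.map_id]
  · intro u hu
    congr 1
    simp only [List.map_map]
    have hpt : ∀ x ∈ u, (g ∘ g') x = id x := by
      intro x hx
      have : x ∈ T := by
        rw [← (mem_wordFinset.1 hu).2]; exact List.mem_toFinset.2 hx
      simp [hg'g x this]
    rw [List.map_congr_left hpt, List.map_id]


/-! ### standardization -/

noncomputable def stdg (S : Finset ℕ) : ℕ → ℕ :=
  fun k => if h : k < S.card then (S.orderIsoOfFin rfl ⟨k, h⟩ : ℕ) else 0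

noncomputable def stdg' (S : Finset ℕ) : ℕ → ℕ :=
  fun y => if h : y ∈ S then ((S.orderIsoOfFin rfl).symm ⟨y, h⟩ : Fin S.card) else 0

theorem stdg_mem (S : Finset ℕ) : ∀ k ∈ Finset.range S.card, stdg S k ∈ S := by
  intro k hk
  rw [Finset.mem_range] at hk
  simp only [stdg, dif_pos hk]
  exact (S.orderIsoOfFin rfl ⟨k, hk⟩).2

theorem stdg'_mem (S : Finset ℕ) : ∀ y ∈ S, stdg' S y ∈ Finset.range S.card := by
  intro y hy
  simp only [stdg', dif_pos hy, Finset.mem_range]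
  exact ((S.orderIsoOfFin rfl).symm ⟨y, hy⟩).isLt

theorem stdg_inv1 (S : Finset ℕ) : ∀ k ∈ Finset.range S.card, stdg' S (stdg S k) = k := by
  intro k hk
  rw [Finset.mem_range] at hk
  simp only [stdg, dif_pos hk, stdg']
  rw [dif_pos (S.orderIsoOfFin rfl ⟨k, hk⟩).2]
  have : (⟨(S.orderIsoOfFin rfl ⟨k, hk⟩ : ℕ), (S.orderIsoOfFin rfl ⟨k, hk⟩).2⟩ :
      {x // x ∈ S}) = S.orderIsoOfFin rfl ⟨k, hk⟩ := rfl
  rw [this, OrderIso.symm_apply_apply]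

theorem stdg_inv2 (S : Finset ℕ) : ∀ y ∈ S, stdg S (stdg' S y) = y := by
  intro y hy
  simp only [stdg', dif_pos hy, stdg]
  rw [dif_pos ((S.orderIsoOfFin rfl).symm ⟨y, hy⟩).isLt]
  have : (⟨((S.orderIsoOfFin rfl).symm ⟨y, hy⟩ : Fin S.card),
      ((S.orderIsoOfFin rfl).symm ⟨y, hy⟩).isLt⟩ : Fin S.card)
      = (S.orderIsoOfFin rfl).symm ⟨y, hy⟩ := rfl
  rw [this, OrderIso.apply_symm_apply]

theorem stdg_mono (S : Finset ℕ) : ∀ x ∈ Finset.range S.card, ∀ y ∈ Finset.range S.card,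
    (x < y ↔ stdg S x < stdg S y) := by
  intro x hx y hy
  rw [Finset.mem_range] at hx hy
  simp only [stdg, dif_pos hx, dif_pos hy]
  rw [show (x < y) ↔ (⟨x, hx⟩ : Fin S.card) < ⟨y, hy⟩ from Iff.rfl]
  rw [← OrderIso.lt_iff_lt (S.orderIsoOfFin rfl)]
  exact Iff.rfl

theorem sum_word_stat (S : Finset ℕ) (st : List ℕ → ℕ)
    (hst : ∀ (g : ℕ → ℕ) (u : List ℕ), (∀ x ∈ u, ∀ y ∈ u, (x < y ↔ g x < g y)) →
      st (u.map g) = st u) :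
    ∑ u ∈ wordFinset S, (Polynomial.X : Polynomial ℚ) ^ st u
      = ∑ u ∈ wordFinset (Finset.range S.card), (Polynomial.X : Polynomial ℚ) ^ st u := by
  rw [sum_wordFinset_relabel (Finset.range S.card) S (stdg S) (stdg' S)
    (stdg_mem S) (stdg'_mem S) (stdg_inv1 S) (stdg_inv2 S)]
  apply Finset.sum_congr rfl
  intro u hu
  congr 1
  apply hst
  intro x hx y hy
  have hfs := (mem_wordFinset.1 hu).2
  exact stdg_mono S x (by rw [← hfs]; exact List.mem_toFinset.2 hx)
    y (by rw [← hfs]; exact List.mem_toFinset.2 hy)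

theorem sum_rStat_word (S : Finset ℕ) :
    ∑ v ∈ wordFinset S, (Polynomial.X : Polynomial ℚ) ^ rStat v
      = ∑ v ∈ wordFinset (Finset.range S.card), (Polynomial.X : Polynomial ℚ) ^ asStat v := by
  rw [sum_word_stat S rStat (fun g u h => rStat_map g u h)]
  set m := S.card with hm
  have hc : ∀ x ∈ Finset.range m, (m - 1 - x) ∈ Finset.range m := by
    intro x hx; rw [Finset.mem_range] at hx ⊢; omega
  have hinv : ∀ x ∈ Finset.range m, (m - 1 - (m - 1 - x)) = x := by
    intro x hx; rw [Finset.mem_range] at hx; omega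
  rw [sum_wordFinset_relabel (Finset.range m) (Finset.range m)
    (fun x => m - 1 - x) (fun x => m - 1 - x) hc hc hinv hinv]
  apply Finset.sum_congr rfl
  intro v hv
  congr 1
  have hfs := (mem_wordFinset.1 hv).2
  apply rStat_map_anti _ v (mem_wordFinset.1 hv).1
  intro x hx y hy
  have hxm : x < m := by
    have := List.mem_toFinset.2 hx
    rw [hfs, Finset.mem_range] at this; exact this
  have hym : y < m := by
    have := List.mem_toFinset.2 hy
    rw [hfs, Finset.mem_range] at this; exact this
  omega


/-! ### splitting a word at its maximum -/

theorem takeWhile_dropWhile_append (n : ℕ) (u v : List ℕ) (hu : ∀ x ∈ u, x ≠ n) :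
    (u ++ n :: v).takeWhile (fun x => decide (x ≠ n)) = u ∧
    (u ++ n :: v).dropWhile (fun x => decide (x ≠ n)) = n :: v := by
  induction u with
  | nil => constructor <;> simp [List.takeWhile, List.dropWhile]
  | cons a r ih =>
    have ha : a ≠ n := hu a (by simp)
    have ihr := ih (fun x hx => hu x (by simp [hx]))
    constructor
    · simp only [List.cons_append, List.takeWhile_cons, decide_eq_true ha, if_true]
      rw [ihr.1]
    · simp only [List.cons_append, List.dropWhile_cons, decide_eq_true ha, if_true]
      exact ihr.2

theorem split_at_max (n : ℕ) : ∀ (w : List ℕ), n ∈ w →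
    w = w.takeWhile (fun x => decide (x ≠ n)) ++
      n :: (w.dropWhile (fun x => decide (x ≠ n))).tail := by
  intro w
  induction w with
  | nil => intro h; simp at h
  | cons a r ih =>
    intro hmem
    by_cases ha : a = n
    · subst ha
      simp [List.takeWhile_cons, List.dropWhile_cons]
    · have hr : n ∈ r := by
        rcases List.mem_cons.1 hmem with h | h
        · exact absurd h.symm ha
        · exact h
      have := ih hr
      simp only [List.takeWhile_cons, List.dropWhile_cons, decide_eq_true ha, if_true]
      rw [List.cons_append]
      exact congrArg (a :: ·) this

theorem sum_words_split {M : Type*} [AddCommMonoid M] (n : ℕ) (f : List ℕ → M) :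
    ∑ w ∈ wordFinset (Finset.range (n+1)), f w
      = ∑ A ∈ (Finset.range n).powerset, ∑ u ∈ wordFinset A,
          ∑ v ∈ wordFinset (Finset.range n \ A), f (u ++ n :: v) := by
  have hrw : ∀ A ∈ (Finset.range n).powerset,
      (∑ u ∈ wordFinset A, ∑ v ∈ wordFinset (Finset.range n \ A), f (u ++ n :: v))
      = ∑ p ∈ wordFinset A ×ˢ wordFinset (Finset.range n \ A), f (p.1 ++ n :: p.2) :=
    fun A _ => (Finset.sum_product' _ _ _).symm
  rw [Finset.sum_congr rfl hrw, Finset.sum_sigma']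
  -- now a bijection between words of range (n+1) and the sigma set
  refine Finset.sum_bij'
    (fun w _ => ⟨(w.takeWhile (fun x => decide (x ≠ n))).toFinset,
      (w.takeWhile (fun x => decide (x ≠ n)), (w.dropWhile (fun x => decide (x ≠ n))).tail)⟩)
    (fun x _ => x.2.1 ++ n :: x.2.2) ?_ ?_ ?_ ?_ ?_
  · -- forward membership
    intro w hw
    obtain ⟨hnd, hfs⟩ := mem_wordFinset.1 hw
    have hnmem : n ∈ w := by
      rw [← List.mem_toFinset, hfs, Finset.mem_range]; omega
    have hsplit := split_at_max n w hnmem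
    set u := w.takeWhile (fun x => decide (x ≠ n)) with hu
    set v := (w.dropWhile (fun x => decide (x ≠ n))).tail with hv
    have hndsplit : (u ++ n :: v).Nodup := hsplit ▸ hnd
    have hfssplit : (u ++ n :: v).toFinset = Finset.range (n+1) := hsplit ▸ hfs
    rw [List.nodup_append] at hndsplit
    obtain ⟨hndu, hndnv, hdisj⟩ := hndsplit
    have hnv : n ∉ v := by
      rw [List.nodup_cons] at hndnv; exact hndnv.1
    have hndv : v.Nodup := by
      rw [List.nodup_cons] at hndnv; exact hndnv.2
    have humem : ∀ x ∈ u, x < n := by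
      intro x hx
      have hxn : x ≠ n := by
        have := List.mem_takeWhile_imp hx
        simpa using this
      have : x ∈ Finset.range (n+1) := by
        rw [← hfssplit]
        simp [List.mem_toFinset, List.mem_append, hx]
      rw [Finset.mem_range] at this
      omega
    have hA : u.toFinset ⊆ Finset.range n := by
      intro x hx
      rw [List.mem_toFinset] at hx
      rw [Finset.mem_range]
      exact humem x hx
    simp only [Finset.mem_sigma, Finset.mem_product]
    refine ⟨Finset.mem_powerset.2 hA, mem_wordFinset.2 ⟨hndu, rfl⟩, mem_wordFinset.2 ⟨hndv, ?_⟩⟩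
    ext x
    rw [List.mem_toFinset, Finset.mem_sdiff, Finset.mem_range, List.mem_toFinset]
    constructor
    · intro hx
      have hxw : x ∈ Finset.range (n+1) := by
        rw [← hfssplit]
        simp [List.mem_toFinset, List.mem_append, hx]
      have hxn : x ≠ n := fun h => hnv (h ▸ hx)
      have hxu : x ∉ u := fun h => hdisj x h x (by simp [hx]) rfl
      rw [Finset.mem_range] at hxw
      exact ⟨by omega, hxu⟩
    · rintro ⟨hxn, hxu⟩
      have : x ∈ u ++ n :: v := by
        rw [← List.mem_toFinset, hfssplit, Finset.mem_range]
        omega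
      rcases List.mem_append.1 this with h | h
      · exact absurd h hxu
      · rcases List.mem_cons.1 h with h | h
        · omega
        · exact h
  · -- backward membership
    rintro ⟨A, u, v⟩ hx
    dsimp only at hx ⊢
    simp only [Finset.mem_sigma, Finset.mem_product] at hx
    obtain ⟨hA, hu, hv⟩ := hx
    rw [Finset.mem_powerset] at hA
    obtain ⟨hndu, hfsu⟩ := mem_wordFinset.1 hu
    obtain ⟨hndv, hfsv⟩ := mem_wordFinset.1 hv
    have humem : ∀ x ∈ u, x < n := by
      intro x hx
      have : x ∈ A := by rw [← hfsu]; exact List.mem_toFinset.2 hx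
      have := hA this
      rwa [Finset.mem_range] at this
    have hvmem : ∀ x ∈ v, x < n ∧ x ∉ u := by
      intro x hx
      have : x ∈ Finset.range n \ A := by rw [← hfsv]; exact List.mem_toFinset.2 hx
      rw [Finset.mem_sdiff, Finset.mem_range] at this
      refine ⟨this.1, fun hxu => this.2 ?_⟩
      rw [← hfsu]; exact List.mem_toFinset.2 hxu
    rw [mem_wordFinset]
    constructor
    · rw [List.nodup_append]
      refine ⟨hndu, ?_, ?_⟩
      · rw [List.nodup_cons]
        exact ⟨fun h => by have := (hvmem n h).1; omega, hndv⟩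
      · intro x hxu y hxnv hxy
        subst hxy
        rcases List.mem_cons.1 hxnv with h | h
        · exact absurd (h ▸ humem x hxu) (by omega)
        · exact (hvmem x h).2 hxu
    · rw [List.toFinset_append, List.toFinset_cons, hfsu, hfsv]
      ext x
      simp only [Finset.mem_union, Finset.mem_insert, Finset.mem_sdiff, Finset.mem_range]
      constructor
      · rintro (h | h | h)
        · have := hA h; rw [Finset.mem_range] at this; omega
        · omega
        · omega
      · intro hx
        by_cases hxa : x ∈ A
        · exact Or.inl hxa
        · by_cases hxn : x = n
          · exact Or.inr (Or.inl hxn)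
          · exact Or.inr (Or.inr ⟨by omega, hxa⟩)
  · -- left inverse
    intro w hw
    obtain ⟨hnd, hfs⟩ := mem_wordFinset.1 hw
    have hnmem : n ∈ w := by
      rw [← List.mem_toFinset, hfs, Finset.mem_range]; omega
    exact (split_at_max n w hnmem).symm
  · -- right inverse
    rintro ⟨A, u, v⟩ hx
    dsimp only at hx ⊢
    simp only [Finset.mem_sigma, Finset.mem_product] at hx
    obtain ⟨hA, hu, hv⟩ := hx
    rw [Finset.mem_powerset] at hA
    obtain ⟨hndu, hfsu⟩ := mem_wordFinset.1 hu
    have humem : ∀ x ∈ u, x ≠ n := by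
      intro x hx
      have : x ∈ A := by rw [← hfsu]; exact List.mem_toFinset.2 hx
      have := hA this
      rw [Finset.mem_range] at this
      omega
    obtain ⟨ht, hd⟩ := takeWhile_dropWhile_append n u v humem
    simp only [ht, hd, List.tail_cons]
    subst hfsu
    rfl
  · -- values agree
    intro w hw
    obtain ⟨hnd, hfs⟩ := mem_wordFinset.1 hw
    have hnmem : n ∈ w := by
      rw [← List.mem_toFinset, hfs, Finset.mem_range]; omega
    exact congrArg f (split_at_max n w hnmem)


/-! ### factorization of the statistic under splitting -/

theorem chg_max_cons (s : Bool) (p n : ℕ) (v : List ℕ) (hp : p < n) (hv : ∀ x ∈ v, x < n) :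
    chg s p (n :: v) = (if s then 0 else 1) + rStat v := by
  cases v with
  | nil =>
    simp only [chg, rStat, decide_eq_true hp]
    cases s <;> simp
  | cons b r =>
    have hb : ¬ (n < b) := by have := hv b (by simp); omega
    simp only [chg, decide_eq_true hp, decide_eq_false hb, rStat]
    cases s <;> simp <;> omega

theorem stat_decomp (u v : List ℕ) (n : ℕ) (hu : ∀ x ∈ u, x < n) (hv : ∀ x ∈ v, x < n) :
    asStat (u ++ n :: v) = 1 + lStat u + rStat v := by
  cases u with
  | nil =>
    simp only [List.nil_append, lStat]
    have h0 : ¬ (n < n) := by omega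
    cases v with
    | nil => simp [asStat, chg, rStat]
    | cons b r =>
      have hb : ¬ (n < b) := by have := hv b (by simp); omega
      simp only [asStat, chg, decide_eq_false hb, rStat]
      simp
      try omega
  | cons c r =>
    have hlsv : lsv c r < n := hu _ (lsv_mem c r)
    simp only [List.cons_append, asStat, chg_append, lStat]
    rw [chg_max_cons (fsn true c r) (lsv c r) n v hlsv hv]
    cases hF : fsn true c r <;> simp <;> omega

/-! ### the polynomials and the recurrence -/

noncomputable def pP (n : ℕ) : Polynomial ℚ :=
  ∑ w ∈ wordFinset (Finset.range n), Polynomial.X ^ asStat w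

noncomputable def lP (n : ℕ) : Polynomial ℚ :=
  ∑ w ∈ wordFinset (Finset.range n), Polynomial.X ^ lStat w

theorem card_range_card (S : Finset ℕ) : (Finset.range S.card).card = S.card := Finset.card_range _

theorem sum_asStat_word (S : Finset ℕ) :
    ∑ u ∈ wordFinset S, (Polynomial.X : Polynomial ℚ) ^ asStat u = pP S.card :=
  sum_word_stat S asStat (fun g u h => asStat_map g u h)

theorem sum_lStat_word (S : Finset ℕ) :
    ∑ u ∈ wordFinset S, (Polynomial.X : Polynomial ℚ) ^ lStat u = lP S.card :=
  sum_word_stat S lStat (fun g u h => lStat_map g u h)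

theorem sum_rStat_word'' (S : Finset ℕ) :
    ∑ v ∈ wordFinset S, (Polynomial.X : Polynomial ℚ) ^ rStat v = pP S.card :=
  sum_rStat_word S

theorem wordFinset_empty : wordFinset (Finset.range 0) = {[]} := by
  apply Finset.ext
  intro l
  rw [mem_wordFinset]
  simp only [Finset.range_zero, Finset.mem_singleton]
  constructor
  · rintro ⟨h1, h2⟩
    cases l with
    | nil => rfl
    | cons a r =>
      exfalso
      have : a ∈ (a :: r).toFinset := by simp
      rw [h2] at this
      exact absurd this (Finset.notMem_empty a)
  · rintro rfl; exact ⟨List.nodup_nil, by simp⟩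

theorem pP_zero : pP 0 = 1 := by
  rw [pP, wordFinset_empty]; simp [asStat]

theorem lP_zero : lP 0 = 1 := by
  rw [lP, wordFinset_empty]; simp [lStat]

theorem pP_rec (n : ℕ) :
    pP (n+1) = Polynomial.X * ∑ m ∈ Finset.range (n+1), (n.choose m) • (lP m * pP (n - m)) := by
  rw [pP, sum_words_split n (fun w => Polynomial.X ^ asStat w)]
  have hstep : ∀ A ∈ (Finset.range n).powerset,
      (∑ u ∈ wordFinset A, ∑ v ∈ wordFinset (Finset.range n \ A),
        (Polynomial.X : Polynomial ℚ) ^ asStat (u ++ n :: v))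
      = Polynomial.X * (lP A.card * pP (n - A.card)) := by
    intro A hA
    have hAsub := Finset.mem_powerset.1 hA
    have hinner : ∀ u ∈ wordFinset A, ∀ v ∈ wordFinset (Finset.range n \ A),
        (Polynomial.X : Polynomial ℚ) ^ asStat (u ++ n :: v)
        = Polynomial.X * (Polynomial.X ^ lStat u * Polynomial.X ^ rStat v) := by
      intro u hu v hv
      have hub : ∀ x ∈ u, x < n := by
        intro x hx
        have : x ∈ A := by rw [← (mem_wordFinset.1 hu).2]; exact List.mem_toFinset.2 hx
        have := hAsub this
        rwa [Finset.mem_range] at this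
      have hvb : ∀ x ∈ v, x < n := by
        intro x hx
        have : x ∈ Finset.range n \ A := by
          rw [← (mem_wordFinset.1 hv).2]; exact List.mem_toFinset.2 hx
        rw [Finset.mem_sdiff, Finset.mem_range] at this
        exact this.1
      rw [stat_decomp u v n hub hvb, pow_add, pow_add, pow_one]
      ring
    calc (∑ u ∈ wordFinset A, ∑ v ∈ wordFinset (Finset.range n \ A),
        (Polynomial.X : Polynomial ℚ) ^ asStat (u ++ n :: v))
        = ∑ u ∈ wordFinset A, ∑ v ∈ wordFinset (Finset.range n \ A),
          Polynomial.X * (Polynomial.X ^ lStat u * Polynomial.X ^ rStat v) := by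
          apply Finset.sum_congr rfl
          intro u hu
          exact Finset.sum_congr rfl (fun v hv => hinner u hu v hv)
      _ = Polynomial.X * ((∑ u ∈ wordFinset A, Polynomial.X ^ lStat u) *
          (∑ v ∈ wordFinset (Finset.range n \ A), Polynomial.X ^ rStat v)) := by
          rw [Finset.sum_mul_sum, Finset.mul_sum]
          apply Finset.sum_congr rfl
          intro u _
          rw [Finset.mul_sum]
      _ = Polynomial.X * (lP A.card * pP (n - A.card)) := by
          rw [sum_lStat_word, sum_rStat_word'']
          congr 2
          rw [Finset.card_sdiff_of_subset hAsub, Finset.card_range]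
  rw [Finset.sum_congr rfl hstep, ← Finset.mul_sum]
  congr 1
  rw [Finset.sum_powerset]
  rw [Finset.card_range]
  apply Finset.sum_congr rfl
  intro j _
  rw [Finset.sum_powersetCard j (Finset.range n) (fun m => lP m * pP (n - m))]
  rw [Finset.card_range]

theorem lStat_even (w : List ℕ) : lStat w % 2 = 0 := by
  cases w with
  | nil => simp [lStat]
  | cons a r =>
    have := chg_mod_two r true a
    simp only [lStat]
    cases hF : fsn true a r <;> rw [hF] at this <;> simp at this ⊢ <;> omega


/-! ### the power-series layer -/

noncomputable def nuh : Polynomial ℚ →ₐ[ℚ] Polynomial ℚ := Polynomial.aeval (-Polynomial.X)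

theorem nuh_X_pow (e : ℕ) :
    nuh (Polynomial.X ^ e) = (-1 : Polynomial ℚ)^e * Polynomial.X ^ e := by
  rw [nuh, map_pow, Polynomial.aeval_X, neg_pow]

theorem nuh_C (a : ℚ) : nuh (Polynomial.C a) = Polynomial.C a := by
  rw [nuh, Polynomial.aeval_C]
  rfl

theorem nuh_lP (n : ℕ) : nuh (lP n) = lP n := by
  rw [lP, map_sum]
  apply Finset.sum_congr rfl
  intro w _
  rw [nuh_X_pow]
  have heven : Even (lStat w) := Nat.even_iff.2 (lStat_even w)
  rw [heven.neg_one_pow, one_mul]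

noncomputable def AS : PowerSeries (Polynomial ℚ) :=
  PowerSeries.mk fun n => Polynomial.C ((n.factorial : ℚ)⁻¹) * pP n

noncomputable def LS : PowerSeries (Polynomial ℚ) :=
  PowerSeries.mk fun n => Polynomial.C ((n.factorial : ℚ)⁻¹) * lP n

theorem map_nuh_LS : PowerSeries.map nuh.toRingHom LS = LS := by
  apply PowerSeries.ext
  intro n
  rw [PowerSeries.coeff_map]
  simp only [LS, PowerSeries.coeff_mk, AlgHom.toRingHom_eq_coe, RingHom.coe_coe]
  rw [map_mul, nuh_C, nuh_lP]

theorem coeff_derivativeFun' (f : PowerSeries (Polynomial ℚ)) (n : ℕ) :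
    PowerSeries.coeff n (PowerSeries.derivativeFun f) = PowerSeries.coeff (n + 1) f * (n + 1) :=
  PowerSeries.coeff_derivative f n

theorem deriv_AS : PowerSeries.derivativeFun AS
    = (PowerSeries.C (R := Polynomial ℚ) Polynomial.X) * (LS * AS) := by
  apply PowerSeries.ext
  intro n
  rw [coeff_derivativeFun']
  rw [PowerSeries.coeff_C_mul, PowerSeries.coeff_mul]
  simp only [AS, LS, PowerSeries.coeff_mk]
  rw [Finset.Nat.sum_antidiagonal_eq_sum_range_succ_mk]
  dsimp only
  rw [pP_rec n]
  rw [show (Polynomial.C ((n+1).factorial : ℚ)⁻¹) *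
      (Polynomial.X * ∑ m ∈ Finset.range (n+1), (n.choose m) • (lP m * pP (n - m))) * ((n : Polynomial ℚ)+1)
      = Polynomial.X * ((∑ m ∈ Finset.range (n+1), (n.choose m) • (lP m * pP (n - m))) *
        (Polynomial.C ((n+1).factorial : ℚ)⁻¹ * ((n : Polynomial ℚ)+1))) from by ring]
  rw [Finset.sum_mul]
  refine congrArg (HMul.hMul (Polynomial.X : Polynomial ℚ)) ?_
  apply Finset.sum_congr rfl
  intro m hm
  have hmn : m ≤ n := by rw [Finset.mem_range] at hm; omega
  have hC : ((n.choose m : Polynomial ℚ)) * (Polynomial.C ((n+1).factorial : ℚ)⁻¹ *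
      ((n : Polynomial ℚ)+1))
      = Polynomial.C ((m.factorial : ℚ)⁻¹) * Polynomial.C (((n-m).factorial : ℚ)⁻¹) := by
    have hcast : ((n : Polynomial ℚ) + 1) = ((n+1 : ℕ) : Polynomial ℚ) := by push_cast; ring
    rw [hcast, ← map_natCast (Polynomial.C : ℚ →+* Polynomial ℚ) (n.choose m),
      ← map_natCast (Polynomial.C : ℚ →+* Polynomial ℚ) (n+1), ← map_mul, ← map_mul, ← map_mul]
    congr 1
    have h1 : ((n+1).factorial : ℚ) = (n+1) * n.factorial := by
      rw [Nat.factorial_succ]; push_cast; ring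
    have h2 : (n.factorial : ℚ) ≠ 0 := Nat.cast_ne_zero.2 (Nat.factorial_ne_zero n)
    have h3 : (m.factorial : ℚ) ≠ 0 := Nat.cast_ne_zero.2 (Nat.factorial_ne_zero m)
    have h4 : (((n-m).factorial) : ℚ) ≠ 0 := Nat.cast_ne_zero.2 (Nat.factorial_ne_zero _)
    have h5 : ((n:ℚ) + 1) ≠ 0 := by positivity
    have key : ((n.choose m : ℚ)) * m.factorial * (n-m).factorial = n.factorial := by
      rw [← Nat.cast_mul, ← Nat.cast_mul, Nat.choose_mul_factorial_mul_factorial hmn]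
    field_simp [h1]
    linear_combination (-1 : ℚ) * h1 + ((n.choose m : ℚ) * m.factorial * (n-m).factorial) * (Nat.cast_succ (R := ℚ) n) + ((n:ℚ)+1) * key
  rw [nsmul_eq_mul]
  calc ((n.choose m : Polynomial ℚ)) * (lP m * pP (n-m)) *
      (Polynomial.C ((n+1).factorial : ℚ)⁻¹ * ((n : Polynomial ℚ)+1))
      = (lP m * pP (n-m)) * (((n.choose m : Polynomial ℚ)) *
        (Polynomial.C ((n+1).factorial : ℚ)⁻¹ * ((n : Polynomial ℚ)+1))) := by ring
    _ = (lP m * pP (n-m)) * (Polynomial.C ((m.factorial : ℚ)⁻¹) *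
        Polynomial.C (((n-m).factorial : ℚ)⁻¹)) := by rw [hC]
    _ = Polynomial.C ((m.factorial : ℚ)⁻¹) * lP m *
        (Polynomial.C (((n-m).factorial : ℚ)⁻¹) * pP (n-m)) := by ring

theorem nuh_X : nuh Polynomial.X = -Polynomial.X := by
  rw [nuh, Polynomial.aeval_X]

theorem deriv_map_nuh (f : PowerSeries (Polynomial ℚ)) :
    PowerSeries.derivativeFun (PowerSeries.map nuh.toRingHom f)
      = PowerSeries.map nuh.toRingHom (PowerSeries.derivativeFun f) := by
  apply PowerSeries.ext
  intro n
  rw [coeff_derivativeFun', PowerSeries.coeff_map, PowerSeries.coeff_map,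
    coeff_derivativeFun', map_mul]
  congr 1
  simp

theorem main_series : AS * PowerSeries.map nuh.toRingHom AS = 1 := by
  set ASb := PowerSeries.map nuh.toRingHom AS with hASb
  have hDb : PowerSeries.derivativeFun ASb
      = (PowerSeries.C (R := Polynomial ℚ) (-Polynomial.X)) * (LS * ASb) := by
    rw [hASb, deriv_map_nuh, deriv_AS, map_mul, map_mul]
    have h1 : PowerSeries.map nuh.toRingHom (PowerSeries.C (R := Polynomial ℚ) Polynomial.X)
        = PowerSeries.C (R := Polynomial ℚ) (-Polynomial.X) := by
      apply PowerSeries.ext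
      intro k
      rw [PowerSeries.coeff_map]
      simp only [PowerSeries.coeff_C, AlgHom.toRingHom_eq_coe, RingHom.coe_coe]
      split
      · exact nuh_X
      · exact map_zero nuh
    rw [h1, map_nuh_LS]
  have hD : PowerSeries.derivativeFun (AS * ASb) = 0 := by
    rw [PowerSeries.derivativeFun_mul, hDb, deriv_AS]
    rw [smul_eq_mul, smul_eq_mul, map_neg]
    ring
  apply PowerSeries.ext
  intro n
  cases n with
  | zero =>
    rw [PowerSeries.coeff_mul, Finset.Nat.antidiagonal_zero, Finset.sum_singleton]
    have hA0 : (PowerSeries.coeff 0) AS = 1 := by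
      simp only [AS, PowerSeries.coeff_mk, pP_zero]
      norm_num
    have hb0 : (PowerSeries.coeff 0) ASb = 1 := by
      rw [hASb, PowerSeries.coeff_map, hA0, map_one]
    dsimp only
    rw [hA0, hb0, PowerSeries.coeff_one]
    simp
  | succ k =>
    have hcoeff := congrArg (PowerSeries.coeff k) hD
    rw [coeff_derivativeFun'] at hcoeff
    simp only [map_zero] at hcoeff
    have hne : ((k : Polynomial ℚ) + 1) ≠ 0 := by
      have h := (Nat.cast_ne_zero (R := Polynomial ℚ)).2 (Nat.succ_ne_zero k)
      push_cast at h
      exact h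
    have h0 : PowerSeries.coeff (k+1) (AS * ASb) = 0 := by
      rcases mul_eq_zero.1 hcoeff with h | h
      · exact h
      · exact absurd h hne
    rw [h0, PowerSeries.coeff_one]
    simp


/-! ### bridge to `aCount` -/

theorem permList_mem_wordFinset (n : ℕ) (w : Equiv.Perm (Fin n)) :
    permList n w ∈ wordFinset (Finset.range n) := by
  rw [mem_wordFinset]
  refine ⟨permList_nodup n w, ?_⟩
  ext x
  rw [List.mem_toFinset, Finset.mem_range, permList]
  constructor
  · intro hx
    rw [List.mem_ofFn] at hx
    obtain ⟨i, rfl⟩ := hx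
    exact (w i).isLt
  · intro hx
    rw [List.mem_ofFn]
    exact ⟨w.symm ⟨x, hx⟩, by simp⟩

theorem aCount_eq_card (n k : ℕ) :
    aCount n k = ((wordFinset (Finset.range n)).filter (fun w => asStat w = k)).card := by
  classical
  rw [aCount, Nat.card_eq_fintype_card, Fintype.card_subtype]
  apply Finset.card_bij (fun (w : Equiv.Perm (Fin n)) _ => permList n w)
  · intro w hw
    rw [Finset.mem_filter] at hw ⊢
    refine ⟨permList_mem_wordFinset n w, ?_⟩
    rw [← asLen_eq]
    exact hw.2
  · intro w₁ h₁ w₂ h₂ heq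
    have hfn : (fun i => ((w₁ i : ℕ))) = (fun i => ((w₂ i : ℕ))) := List.ofFn_injective heq
    apply Equiv.ext
    intro i
    exact Fin.ext (congrFun hfn i)
  · intro l hl
    rw [Finset.mem_filter] at hl
    obtain ⟨hlw, hlk⟩ := hl
    obtain ⟨hnd, hfs⟩ := mem_wordFinset.1 hlw
    have hlen : l.length = n := by
      rw [length_of_mem_wordFinset hlw, Finset.card_range]
    have hget : ∀ i : Fin n, l.get ⟨i, by rw [hlen]; exact i.isLt⟩ < n := by
      intro i
      have : l.get ⟨i, by rw [hlen]; exact i.isLt⟩ ∈ l := List.get_mem _ _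
      rw [← List.mem_toFinset, hfs, Finset.mem_range] at this
      exact this
    set f : Fin n → Fin n := fun i => ⟨l.get ⟨i, by rw [hlen]; exact i.isLt⟩, hget i⟩ with hf
    have hinj : Function.Injective f := by
      intro i j hij
      have : l.get ⟨i, by rw [hlen]; exact i.isLt⟩ = l.get ⟨j, by rw [hlen]; exact j.isLt⟩ := by
        have := congrArg Fin.val hij
        exact this
      have h2 := (List.Nodup.get_inj_iff hnd).1 this
      have := congrArg Fin.val h2
      exact Fin.ext this
    have hbij : Function.Bijective f := Finite.injective_iff_bijective.1 hinj
    refine ⟨Equiv.ofBijective f hbij, Finset.mem_filter.2 ⟨Finset.mem_univ _, ?_⟩, ?_⟩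
    · rw [asLen_eq]
      have : permList n (Equiv.ofBijective f hbij) = l := by
        apply List.ext_get
        · simp only [permList, List.length_ofFn, hlen]
        · intro i h1 h2
          simp only [permList, List.get_ofFn]
          rfl
      rw [this]
      exact hlk
    · apply List.ext_get
      · simp only [permList, List.length_ofFn, hlen]
      · intro i h1 h2
        simp only [permList, List.get_ofFn]
        rfl

theorem coeff_pP (n k : ℕ) : (pP n).coeff k = (aCount n k : ℚ) := by
  rw [pP, Polynomial.finset_sum_coeff]
  simp only [Polynomial.coeff_X_pow]
  rw [aCount_eq_card, Finset.card_filter]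
  push_cast
  apply Finset.sum_congr rfl
  intro w _
  by_cases h : asStat w = k
  · simp [h]
  · simp [h, Ne.symm h]

theorem nuh_X_pow' (e : ℕ) :
    nuh (Polynomial.X ^ e) = Polynomial.C ((-1 : ℚ)^e) * Polynomial.X ^ e := by
  rw [nuh_X_pow]
  congr 1
  rw [map_pow, map_neg, map_one]

theorem coeff_nuh_pP (m j : ℕ) : (nuh (pP m)).coeff j = (-1 : ℚ)^j * (aCount m j : ℚ) := by
  rw [pP, map_sum, Polynomial.finset_sum_coeff]
  have hterm : ∀ w ∈ wordFinset (Finset.range m),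
      (nuh (Polynomial.X ^ asStat w)).coeff j
        = (-1 : ℚ)^j * (if asStat w = j then 1 else 0) := by
    intro w _
    rw [nuh_X_pow', Polynomial.coeff_C_mul, Polynomial.coeff_X_pow]
    by_cases h : asStat w = j
    · subst h; simp
    · simp [h, Ne.symm h]
  rw [Finset.sum_congr rfl hterm, ← Finset.mul_sum]
  congr 1
  rw [aCount_eq_card, Finset.card_filter]
  push_cast
  rfl

/-! ### the numeric identity -/

theorem extraction (n k : ℕ) :
    (∑ p ∈ Finset.HasAntidiagonal.antidiagonal n, ∑ q ∈ Finset.HasAntidiagonal.antidiagonal k,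
      (((p.1.factorial : ℚ)⁻¹ * aCount p.1 q.1)
        * ((-1 : ℚ)^q.2 * ((p.2.factorial : ℚ)⁻¹ * aCount p.2 q.2))))
      = if n = 0 ∧ k = 0 then 1 else 0 := by
  have h := congrArg (fun f =>
    Polynomial.coeff ((PowerSeries.coeff n) f) k) main_series
  rw [PowerSeries.coeff_mul] at h
  have hcoe : ∀ p ∈ Finset.HasAntidiagonal.antidiagonal n,
      ((PowerSeries.coeff p.1) AS
        * (PowerSeries.coeff p.2) (PowerSeries.map nuh.toRingHom AS))
      = (Polynomial.C ((p.1.factorial : ℚ)⁻¹) * pP p.1)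
        * (Polynomial.C ((p.2.factorial : ℚ)⁻¹) * nuh (pP p.2)) := by
    intro p _
    rw [PowerSeries.coeff_map]
    simp only [AS, PowerSeries.coeff_mk, AlgHom.toRingHom_eq_coe, RingHom.coe_coe]
    rw [map_mul, nuh_C]
  rw [Finset.sum_congr rfl hcoe] at h
  rw [Polynomial.finset_sum_coeff] at h
  have hterm : ∀ p ∈ Finset.HasAntidiagonal.antidiagonal n,
      ((Polynomial.C ((p.1.factorial : ℚ)⁻¹) * pP p.1)
        * (Polynomial.C ((p.2.factorial : ℚ)⁻¹) * nuh (pP p.2))).coeff k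
      = ∑ q ∈ Finset.HasAntidiagonal.antidiagonal k,
          (((p.1.factorial : ℚ)⁻¹ * aCount p.1 q.1)
            * ((-1 : ℚ)^q.2 * ((p.2.factorial : ℚ)⁻¹ * aCount p.2 q.2))) := by
    intro p _
    rw [Polynomial.coeff_mul]
    apply Finset.sum_congr rfl
    intro q _
    rw [Polynomial.coeff_C_mul, Polynomial.coeff_C_mul, coeff_pP, coeff_nuh_pP]
    ring
  rw [Finset.sum_congr rfl hterm] at h
  rw [h]
  rw [PowerSeries.coeff_one]
  by_cases hn : n = 0
  · subst hn
    simp only [if_pos rfl, Polynomial.coeff_one]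
    by_cases hk : k = 0
    · subst hk; simp
    · simp [Polynomial.coeff_one, hk]
  · simp [hn]


/-! ### final assembly -/

theorem fin2_eq (d : Fin 2 →₀ ℕ) :
    Finsupp.single (0 : Fin 2) (d 0) + Finsupp.single 1 (d 1) = d := by
  ext i
  fin_cases i <;> simp [Finsupp.single_apply]

theorem fs_apply0 (x y : ℕ) :
    ((Finsupp.single (0 : Fin 2) x + Finsupp.single 1 y) : Fin 2 →₀ ℕ) 0 = x := by
  rw [Finsupp.add_apply]
  simp [Finsupp.single_apply]

theorem fs_apply1 (x y : ℕ) :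
    ((Finsupp.single (0 : Fin 2) x + Finsupp.single 1 y) : Fin 2 →₀ ℕ) 1 = y := by
  rw [Finsupp.add_apply]
  simp [Finsupp.single_apply]

theorem sum_antidiag_fin2 (d : Fin 2 →₀ ℕ) (F : ℕ → ℕ → ℕ → ℕ → ℚ) :
    ∑ p ∈ Finset.HasAntidiagonal.antidiagonal d, F (p.1 0) (p.2 0) (p.1 1) (p.2 1)
      = ∑ a ∈ Finset.HasAntidiagonal.antidiagonal (d 0), ∑ q ∈ Finset.HasAntidiagonal.antidiagonal (d 1),
          F a.1 a.2 q.1 q.2 := by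
  rw [← Finset.sum_product']
  refine Finset.sum_nbij' (fun p => ((p.1 0, p.2 0), (p.1 1, p.2 1)))
    (fun q => (Finsupp.single (0 : Fin 2) q.1.1 + Finsupp.single 1 q.2.1,
               Finsupp.single (0 : Fin 2) q.1.2 + Finsupp.single 1 q.2.2)) ?_ ?_ ?_ ?_ ?_
  · intro p hp
    rw [Finset.HasAntidiagonal.mem_antidiagonal] at hp
    rw [Finset.mem_product, Finset.HasAntidiagonal.mem_antidiagonal, Finset.HasAntidiagonal.mem_antidiagonal]
    constructor
    · have := congrArg (fun f => f 0) hp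
      simpa [Finsupp.add_apply] using this
    · have := congrArg (fun f => f 1) hp
      simpa [Finsupp.add_apply] using this
  · intro q hq
    rw [Finset.mem_product, Finset.HasAntidiagonal.mem_antidiagonal, Finset.HasAntidiagonal.mem_antidiagonal] at hq
    rw [Finset.HasAntidiagonal.mem_antidiagonal]
    have hre : (Finsupp.single (0 : Fin 2) q.1.1 + Finsupp.single 1 q.2.1) +
           (Finsupp.single (0 : Fin 2) q.1.2 + Finsupp.single 1 q.2.2)
         = Finsupp.single (0 : Fin 2) (q.1.1 + q.1.2) + Finsupp.single 1 (q.2.1 + q.2.2) := by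
      rw [Finsupp.single_add, Finsupp.single_add]
      abel
    rw [hre, hq.1, hq.2, fin2_eq]
  · intro p hp
    dsimp only
    exact Prod.ext (fin2_eq p.1) (fin2_eq p.2)
  · intro q hq
    dsimp only
    rw [fs_apply0, fs_apply0, fs_apply1, fs_apply1]
  · intro p hp
    rfl

noncomputable def Bser : MvPowerSeries (Fin 2) ℚ :=
  fun d => (aCount (d 0) (d 1) : ℚ) / (d 0).factorial

noncomputable def Bbar : MvPowerSeries (Fin 2) ℚ :=
  fun d => (-1 : ℚ)^(d 1) * ((aCount (d 0) (d 1) : ℚ) / (d 0).factorial)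

theorem Ae_add_Ao : Ae + Ao = Bser := by
  funext d
  show Ae d + Ao d = Bser d
  by_cases h : d 1 % 2 = 0
  · have h1 : ¬ (d 1 % 2 = 1) := by omega
    simp [Ae, Ao, Bser, h, h1]
  · have h1 : d 1 % 2 = 1 := by omega
    simp [Ae, Ao, Bser, h, h1]

theorem Ae_sub_Ao : Ae - Ao = Bbar := by
  funext d
  show Ae d - Ao d = Bbar d
  by_cases h : d 1 % 2 = 0
  · have h1 : ¬ (d 1 % 2 = 1) := by omega
    have he : (-1 : ℚ)^(d 1) = 1 := (Nat.even_iff.2 h).neg_one_pow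
    simp [Ae, Ao, Bbar, h, h1, he]
  · have h1 : d 1 % 2 = 1 := by omega
    have he : (-1 : ℚ)^(d 1) = -1 := (Nat.odd_iff.2 h1).neg_one_pow
    simp [Ae, Ao, Bbar, h, h1, he]

theorem Bser_mul_Bbar : Bser * Bbar = 1 := by
  apply MvPowerSeries.ext
  intro d
  rw [MvPowerSeries.coeff_mul]
  have hc : ∀ p : (Fin 2 →₀ ℕ) × (Fin 2 →₀ ℕ),
      (MvPowerSeries.coeff p.1) Bser * (MvPowerSeries.coeff p.2) Bbar
      = (((p.1 0).factorial : ℚ)⁻¹ * (aCount (p.1 0) (p.1 1)))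
        * ((-1 : ℚ)^(p.2 1) * (((p.2 0).factorial : ℚ)⁻¹ * (aCount (p.2 0) (p.2 1)))) := by
    intro p
    show Bser p.1 * Bbar p.2 = _
    simp only [Bser, Bbar, div_eq_mul_inv]
    ring
  rw [Finset.sum_congr rfl (fun p _ => hc p)]
  rw [sum_antidiag_fin2 d (fun a b i j =>
    ((a.factorial : ℚ)⁻¹ * (aCount a i)) * ((-1 : ℚ)^j * ((b.factorial : ℚ)⁻¹ * (aCount b j))))]
  rw [extraction (d 0) (d 1), MvPowerSeries.coeff_one]
  by_cases hd : d = 0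
  · have h0 : d 0 = 0 := by rw [hd]; rfl
    have h1 : d 1 = 0 := by rw [hd]; rfl
    simp [hd, h0, h1]
  · have hnot : ¬ (d 0 = 0 ∧ d 1 = 0) := by
      rintro ⟨h0, h1⟩
      apply hd
      ext i
      fin_cases i
      · exact h0
      · exact h1
    simp [hd, hnot]

end AltProof

theorem Ae_sq_sub_Ao_sq : Ae ^ 2 - Ao ^ 2 = 1 := by
  have h : Ae ^ 2 - Ao ^ 2 = (Ae + Ao) * (Ae - Ao) := by ring
  rw [h, AltProof.Ae_add_Ao, AltProof.Ae_sub_Ao, AltProof.Bser_mul_Bbar]
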